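/- Equivariant CSP over the ordered rationals: let G = Aut(ℚ,<) be the group of order-isomorphisms of ℚ with the topology of pointwise convergence. Let V be a set with a G-action all of whose point stabilizers are open, let ι index relations R_V i ⊆ V^(n i) that are G-invariant, and let D be a finite set with relations R_D i ⊆ D^(n i). If there exists a homomorphism from (V, R_V) to (D, R_D), then there exists a G-equivariant homomorphism h, i.e., one satisfying h(g • v) = h(v) for all g ∈ G and v ∈ V. -/

import Mathlib

/-! Auxiliary lemmas -/

theorem myRamsey {D : Type*} [Finite D] :
    ∀ (k : ℕ) (c : Finset ℕ → D) (A : Set ℕ), A.Infinite →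
      ∃ B ⊆ A, B.Infinite ∧ ∀ s : Finset ℕ, ↑s ⊆ B → s.card = k →
        ∀ t : Finset ℕ, ↑t ⊆ B → t.card = k → c s = c t := by
  intro k
  induction k with
  | zero =>
    intro c A hA
    refine ⟨A, le_refl _, hA, ?_⟩
    intro s hs hs0 t ht ht0
    rw [Finset.card_eq_zero] at hs0 ht0
    rw [hs0, ht0]
  | succ k ih =>
    intro c A hA
    have step : ∀ (p : {p : Set ℕ // p.Infinite}),
        ∃ q : ℕ × {p : Set ℕ // p.Infinite},
          q.1 ∈ p.1 ∧ q.2.1 ⊆ p.1 ∧ (∀ x ∈ q.2.1, q.1 < x) ∧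
          ∀ s : Finset ℕ, ↑s ⊆ q.2.1 → s.card = k →
            ∀ t : Finset ℕ, ↑t ⊆ q.2.1 → t.card = k →
              c (insert q.1 s) = c (insert q.1 t) := by
      rintro ⟨A, hA⟩
      obtain ⟨a, ha⟩ := hA.nonempty
      have hA' : {x ∈ A | a < x}.Infinite := by
        have h1 : A \ Set.Iic a ⊆ {x ∈ A | a < x} := by
          rintro x ⟨hx1, hx2⟩
          exact ⟨hx1, lt_of_not_ge fun h => hx2 h⟩
        exact ((hA.diff (Set.finite_Iic a)).mono h1)
      obtain ⟨B, hBsub, hBinf, hhom⟩ := ih (fun s => c (insert a s)) _ hA'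
      exact ⟨(a, ⟨B, hBinf⟩), ha, fun x hx => (hBsub hx).1,
        fun x hx => (hBsub hx).2, hhom⟩
    classical
    let F : {p : Set ℕ // p.Infinite} → ℕ × {p : Set ℕ // p.Infinite} :=
      fun p => (step p).choose
    let seq : ℕ → {p : Set ℕ // p.Infinite} :=
      fun n => (fun p => (F p).2)^[n] ⟨A, hA⟩
    let aseq : ℕ → ℕ := fun n => (F (seq n)).1
    have hseq_succ : ∀ n, seq (n+1) = (F (seq n)).2 := by
      intro n
      exact Function.iterate_succ_apply' _ n _
    have h1 : ∀ n, aseq n ∈ (seq n).1 := fun n => (step (seq n)).choose_spec.1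
    have h2 : ∀ n, (seq (n+1)).1 ⊆ (seq n).1 := by
      intro n; rw [hseq_succ n]; exact (step (seq n)).choose_spec.2.1
    have h3 : ∀ n x, x ∈ (seq (n+1)).1 → aseq n < x := by
      intro n; rw [hseq_succ n]; exact (step (seq n)).choose_spec.2.2.1
    have h4 : ∀ n (s : Finset ℕ), ↑s ⊆ (seq (n+1)).1 → s.card = k →
        ∀ t : Finset ℕ, ↑t ⊆ (seq (n+1)).1 → t.card = k →
          c (insert (aseq n) s) = c (insert (aseq n) t) := by
      intro n; rw [hseq_succ n]; exact (step (seq n)).choose_spec.2.2.2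
    have chain : ∀ m n, m ≤ n → (seq n).1 ⊆ (seq m).1 := by
      intro m n hmn
      induction n, hmn using Nat.le_induction with
      | base => exact le_refl _
      | succ n hmn ihn => exact (h2 n).trans ihn
    have amem : ∀ n, aseq n ∈ A := fun n => chain 0 n (Nat.zero_le n) (h1 n)
    have amono : StrictMono aseq := by
      apply strictMono_nat_of_lt_succ
      intro n
      exact h3 n _ (h1 (n+1))
    have pick : ∀ m, ∃ t : Finset ℕ, ↑t ⊆ (seq (m+1)).1 ∧ t.card = k :=
      fun m => (seq (m+1)).2.exists_subset_card_eq k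
    let d : ℕ → D := fun m => c (insert (aseq m) (pick m).choose)
    have key : ∀ m (s : Finset ℕ), ↑s ⊆ (seq (m+1)).1 → s.card = k →
        c (insert (aseq m) s) = d m := by
      intro m s hs hcard
      exact h4 m s hs hcard _ (pick m).choose_spec.1 (pick m).choose_spec.2
    have pigeon : ∃ d0 : D, {m | d m = d0}.Infinite := by
      by_contra hcon
      push_neg at hcon
      have : (Set.univ : Set ℕ).Finite := by
        have hsub : (Set.univ : Set ℕ) ⊆ ⋃ d0 : D, {m | d m = d0} := by
          intro m _
          exact Set.mem_iUnion.mpr ⟨d m, rfl⟩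
        exact (Set.finite_iUnion hcon).subset hsub
      exact Set.infinite_univ this
    obtain ⟨d0, hM⟩ := pigeon
    refine ⟨aseq '' {m | d m = d0}, ?_, ?_, ?_⟩
    · rintro x ⟨m, _, rfl⟩; exact amem m
    · exact hM.image (amono.injective.injOn)
    · have main : ∀ s : Finset ℕ, ↑s ⊆ aseq '' {m | d m = d0} → s.card = k + 1 →
          c s = d0 := by
        intro s hs hcard
        have hne : s.Nonempty := Finset.card_pos.mp (by omega)
        obtain ⟨m, hmM, hmin⟩ := hs (s.min'_mem hne)
        have herase : ↑(s.erase (s.min' hne)) ⊆ (seq (m+1)).1 := by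
          intro x hx
          have hxs : x ∈ s := Finset.mem_of_mem_erase hx
          have hxne : x ≠ s.min' hne := Finset.ne_of_mem_erase hx
          obtain ⟨m', _, rfl⟩ := hs hxs
          have hlt : aseq m < aseq m' := by
            rw [hmin]
            exact lt_of_le_of_ne (s.min'_le _ hxs) (Ne.symm hxne)
          have hmm' : m + 1 ≤ m' := amono.lt_iff_lt.mp hlt
          exact chain (m+1) m' hmm' (h1 m')
        have hcarde : (s.erase (s.min' hne)).card = k :=
          by rw [Finset.card_erase_of_mem (s.min'_mem hne)]; omega
        have hmem : aseq m ∈ s := by rw [hmin]; exact s.min'_mem hne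
        have : c s = d m := by
          rw [← key m _ herase hcarde, ← hmin, Finset.insert_erase hmem]
        rw [this]; exact hmM
      intro s hs hcs t ht hct
      rw [main s hs hcs, main t ht hct]

theorem myRamseyFamily {D ι : Type*} [Finite D] (J : Finset ι) (k : ι → ℕ)
    (c : ι → Finset ℕ → D) :
    ∀ (A : Set ℕ), A.Infinite →
    ∃ B ⊆ A, B.Infinite ∧ ∀ j ∈ J, ∀ s : Finset ℕ, ↑s ⊆ B → s.card = k j →
      ∀ t : Finset ℕ, ↑t ⊆ B → t.card = k j → c j s = c j t := by
  classical
  induction J using Finset.induction_on with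
  | empty => intro A hA; exact ⟨A, le_refl _, hA, by simp⟩
  | insert _ _ hj ih =>
    rename_i j J'
    intro A hA
    obtain ⟨B, hBA, hBinf, hB⟩ := ih A hA
    obtain ⟨B', hB'B, hB'inf, hB'⟩ := myRamsey (k j) (c j) B hBinf
    refine ⟨B', hB'B.trans hBA, hB'inf, ?_⟩
    intro j' hj' s hs hcs t ht hct
    rcases Finset.mem_insert.mp hj' with rfl | hj'
    · exact hB' s hs hcs t ht hct
    · exact hB j' hj' s (hs.trans hB'B) hcs t (ht.trans hB'B) hct

theorem orderIso_agree (A : Finset ℚ) (γ γ' : ℚ ≃o ℚ) (him : A.image γ = A.image γ') :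
    ∀ q ∈ A, γ q = γ' q := by
  classical
  have key : ∀ (δ : ℚ ≃o ℚ) (h : (A.image δ).card = A.card),
      (fun i => δ (A.orderEmbOfFin rfl i)) = ⇑((A.image δ).orderEmbOfFin h) := by
    intro δ h
    apply Finset.orderEmbOfFin_unique
    · intro i
      exact Finset.mem_image_of_mem _ (Finset.orderEmbOfFin_mem _ _ _)
    · exact δ.strictMono.comp (A.orderEmbOfFin rfl).strictMono
  have hc : (A.image γ).card = A.card := Finset.card_image_of_injective _ γ.injective
  have hc' : (A.image γ').card = A.card := Finset.card_image_of_injective _ γ'.injective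
  intro q hq
  have hqr : q ∈ Set.range (A.orderEmbOfFin rfl) := by
    rw [Finset.range_orderEmbOfFin]; exact hq
  obtain ⟨i, rfl⟩ := hqr
  have h1 := congrFun (key γ hc) i
  have h2 := congrFun (key γ' hc') i
  have emb_congr : ∀ (s t : Finset ℚ) (_ : s = t) (hs : s.card = A.card)
      (ht : t.card = A.card) (i : Fin A.card), s.orderEmbOfFin hs i = t.orderEmbOfFin ht i := by
    rintro s t rfl hs ht i; rfl
  rw [h1, h2, emb_congr _ _ him hc hc']

theorem exists_orderIso_image (S T : Finset ℚ) (h : S.card = T.card) :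
    ∃ γ : ℚ ≃o ℚ, S.image γ = T := by
  classical
  set n := S.card with hn
  let eS : Fin n ↪o ℚ := S.orderEmbOfFin rfl
  let eT : Fin n ↪o ℚ := T.orderEmbOfFin h.symm
  have hf0 : ∀ p ∈ Finset.image (fun i => ((eS i : ℚ), (eT i : ℚ))) Finset.univ,
      ∀ q ∈ Finset.image (fun i => ((eS i : ℚ), (eT i : ℚ))) Finset.univ,
        cmp p.1 q.1 = cmp p.2 q.2 := by
    intro p hp q hq
    simp only [Finset.mem_image, Finset.mem_univ, true_and] at hp hq
    obtain ⟨i, rfl⟩ := hp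
    obtain ⟨j, rfl⟩ := hq
    rw [eS.strictMono.cmp_map_eq, eT.strictMono.cmp_map_eq]
  let f₀ : Order.PartialIso ℚ ℚ := ⟨_, hf0⟩
  let to_cofinal : ℚ ⊕ ℚ → Order.Cofinal (Order.PartialIso ℚ ℚ) := fun p =>
    Sum.recOn p (Order.PartialIso.definedAtLeft ℚ) (Order.PartialIso.definedAtRight ℚ)
  let our_ideal : Order.Ideal (Order.PartialIso ℚ ℚ) := Order.idealOfCofinals f₀ to_cofinal
  let F := fun a => Order.PartialIso.funOfIdeal a our_ideal
    (Order.cofinal_meets_idealOfCofinals _ to_cofinal (Sum.inl a))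
  let G := fun b => Order.PartialIso.invOfIdeal b our_ideal
    (Order.cofinal_meets_idealOfCofinals _ to_cofinal (Sum.inr b))
  let γ : ℚ ≃o ℚ := OrderIso.ofCmpEqCmp (fun a => (F a).val) (fun b => (G b).val)
    (fun a b => by
      rcases (F a).prop with ⟨f, hf, ha⟩
      rcases (G b).prop with ⟨g, hg, hb⟩
      rcases our_ideal.directed _ hf _ hg with ⟨m, _, fm, gm⟩
      exact m.prop (a, _) (fm ha) (_, b) (gm hb))
  have hγ : ∀ i : Fin n, γ (eS i) = eT i := by
    intro i
    rcases (F (eS i)).prop with ⟨f, hf, hab⟩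
    have hf₀mem : f₀ ∈ our_ideal := Order.mem_idealOfCofinals _ _
    rcases our_ideal.directed _ hf _ hf₀mem with ⟨m, _, fm, f0m⟩
    have hpair : ((eS i : ℚ), (eT i : ℚ)) ∈ f₀.val :=
      Finset.mem_image_of_mem _ (Finset.mem_univ i)
    have := m.prop _ (fm hab) _ (f0m hpair)
    simp only [cmp_self_eq_eq] at this
    have heq : (F (eS i)).val = eT i := by
      have := this.symm
      rwa [cmp_eq_eq_iff] at this
    exact heq
  refine ⟨γ, ?_⟩
  apply Finset.eq_of_subset_of_card_le
  · intro x hx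
    simp only [Finset.mem_image] at hx
    obtain ⟨q, hq, rfl⟩ := hx
    have hqr : q ∈ Set.range eS := by
      rw [Finset.range_orderEmbOfFin]; exact hq
    obtain ⟨i, rfl⟩ := hqr
    rw [hγ i]
    exact Finset.orderEmbOfFin_mem _ _ _
  · rw [Finset.card_image_of_injective _ γ.injective, ← h]

noncomputable def pickIso (S U : Finset ℚ) : ℚ ≃o ℚ :=
  if h : S.card = U.card then (exists_orderIso_image S U h).choose else 1

theorem pickIso_spec (S U : Finset ℚ) (h : S.card = U.card) :
    S.image (pickIso S U) = U := by
  rw [pickIso, dif_pos h]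
  exact (exists_orderIso_image S U h).choose_spec

/-- The topology of pointwise convergence on the group `ℚ ≃o ℚ` of order-isomorphisms
of the rationals: the topology induced from the product topology on `ℚ → ℚ`,
with `ℚ` discrete. -/
instance rankTop : TopologicalSpace (ℚ ≃o ℚ) :=
  TopologicalSpace.induced (fun g : ℚ ≃o ℚ => (g : ℚ → ℚ))
    (@Pi.topologicalSpace ℚ (fun _ => ℚ) (fun _ => ⊥))

theorem stmt_8 {V D ι : Type*} [MulAction (ℚ ≃o ℚ) V] [Finite D]
    (hstab : ∀ v : V, IsOpen {g : ℚ ≃o ℚ | g • v = v})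
    (n : ι → ℕ) (RV : ∀ i, (Fin (n i) → V) → Prop) (RD : ∀ i, (Fin (n i) → D) → Prop)
    (hinv : ∀ i (x : Fin (n i) → V) (g : ℚ ≃o ℚ), RV i x → RV i (fun k => g • x k))
    (hsol : ∃ f : V → D, ∀ i (x : Fin (n i) → V), RV i x → RD i (f ∘ x)) :
    ∃ h : V → D, (∀ i (x : Fin (n i) → V), RV i x → RD i (h ∘ x)) ∧
      ∀ (g : ℚ ≃o ℚ) (v : V), h (g • v) = h v := by
  classical
  obtain ⟨f, hf⟩ := hsol
  -- finite supports from open stabilizers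
  have hsupp0 : ∀ v : V, ∃ S : Finset ℚ, ∀ g : ℚ ≃o ℚ, (∀ q ∈ S, g q = q) → g • v = v := by
    intro v
    have h := hstab v
    rw [@isOpen_induced_iff _ _ (@Pi.topologicalSpace ℚ (fun _ => ℚ) (fun _ => ⊥)) _ _] at h
    obtain ⟨t, ht, hpre⟩ := h
    have h1 : ((1 : ℚ ≃o ℚ) : ℚ → ℚ) ∈ t := by
      have h0 : (1 : ℚ ≃o ℚ) ∈ {g : ℚ ≃o ℚ | g • v = v} := by
        simp [one_smul]
      rw [← hpre] at h0
      exact h0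
    rw [@isOpen_pi_iff ℚ (fun _ => ℚ) (fun _ => ⊥)] at ht
    obtain ⟨I, u, hIu, hsub⟩ := ht _ h1
    refine ⟨I, fun g hg => ?_⟩
    have hmem : (g : ℚ → ℚ) ∈ (↑I : Set ℚ).pi u := by
      intro q hq
      have := (hIu q hq).2
      rw [hg q hq]
      exact this
    have h2 : g ∈ (fun g : ℚ ≃o ℚ => (g : ℚ → ℚ)) ⁻¹' t := hsub hmem
    rw [hpre] at h2
    exact h2
  choose supp hsupp using hsupp0
  have agree_smul : ∀ (v : V) (γ γ' : ℚ ≃o ℚ), (∀ q ∈ supp v, γ q = γ' q) → γ • v = γ' • v := by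
    intro v γ γ' hag
    have hg : (γ'⁻¹ * γ) • v = v := by
      apply hsupp v
      intro q hq
      show γ'.symm (γ q) = q
      rw [hag q hq]
      exact γ'.symm_apply_apply q
    calc γ • v = (γ' * (γ'⁻¹ * γ)) • v := by rw [mul_inv_cancel_left]
      _ = γ' • ((γ'⁻¹ * γ) • v) := mul_smul _ _ _
      _ = γ' • v := by rw [hg]
  have image_smul : ∀ (v : V) (γ γ' : ℚ ≃o ℚ),
      (supp v).image γ = (supp v).image γ' → γ • v = γ' • v :=
    fun v γ γ' him => agree_smul v γ γ' (fun q hq => orderIso_agree _ _ _ him q hq)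
  have phi_eq : ∀ (v : V) (γ : ℚ ≃o ℚ),
      f (γ • v) = f ((pickIso (supp v) ((supp v).image γ)) • v) := by
    intro v γ
    congr 1
    apply image_smul
    exact (pickIso_spec _ _ (Finset.card_image_of_injective _ γ.injective).symm).symm
  -- finite step
  have finite_step : ∀ s : Finset ((ℚ ≃o ℚ) × V), ∃ h : V → D,
      (∀ i (x : Fin (n i) → V), RV i x → RD i (h ∘ x)) ∧
      ∀ p ∈ s, h (p.1 • p.2) = h p.2 := by
    intro s
    set k : (ℚ ≃o ℚ) × V → ℕ := fun p => (supp p.2).card with hk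
    set c : (ℚ ≃o ℚ) × V → Finset ℕ → D :=
      fun p u => f ((pickIso (supp p.2) (u.image (fun m : ℕ => (m : ℚ)))) • p.2) with hc
    obtain ⟨B, _, hBinf, hB⟩ := myRamseyFamily s k c Set.univ Set.infinite_univ
    set S : Finset ℚ := s.biUnion (fun p => supp p.2 ∪ (supp p.2).image p.1) with hS
    obtain ⟨T', hT'B, hT'card⟩ := hBinf.exists_subset_card_eq S.card
    set T : Finset ℚ := T'.image (fun m : ℕ => (m : ℚ)) with hT
    have hcast_inj : Function.Injective (fun m : ℕ => (m : ℚ)) :=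
      fun a b hab => Nat.cast_injective hab
    have hTcard : S.card = T.card := by
      rw [hT, Finset.card_image_of_injective _ hcast_inj, hT'card]
    set γ₀ := pickIso S T with hγ₀def
    have hγ₀ : S.image γ₀ = T := pickIso_spec S T hTcard
    refine ⟨fun v => f (γ₀ • v), ?_, ?_⟩
    · intro i x hx
      have hcomp : (fun v => f (γ₀ • v)) ∘ x = f ∘ (fun j => γ₀ • x j) := rfl
      rw [hcomp]
      exact hf i _ (hinv i x γ₀ hx)
    · rintro ⟨g, v⟩ hp
      simp only
      have claim : ∀ γ : ℚ ≃o ℚ, (supp v).image γ ⊆ T →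
          ∃ u : Finset ℕ, ↑u ⊆ B ∧ u.card = k (g, v) ∧ f (γ • v) = c (g, v) u := by
        intro γ hsub
        set U := (supp v).image γ with hU
        set u : Finset ℕ := T'.filter (fun m => ((m : ℚ) ∈ U)) with hu
        have huU : u.image (fun m : ℕ => (m : ℚ)) = U := by
          apply Finset.Subset.antisymm
          · intro x hx
            simp only [hu, Finset.mem_image, Finset.mem_filter] at hx
            obtain ⟨m, ⟨_, hmU⟩, rfl⟩ := hx
            exact hmU
          · intro x hx
            have hxT : x ∈ T := hsub hx
            rw [hT, Finset.mem_image] at hxT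
            obtain ⟨m, hm, rfl⟩ := hxT
            exact Finset.mem_image_of_mem _ (Finset.mem_filter.mpr ⟨hm, hx⟩)
        refine ⟨u, ?_, ?_, ?_⟩
        · intro m hm
          exact hT'B (Finset.mem_filter.mp (Finset.mem_coe.mp hm)).1
        · have h1 : u.card = U.card := by
            rw [← huU, Finset.card_image_of_injective _ hcast_inj]
          rw [h1, hU, Finset.card_image_of_injective _ γ.injective]
        · show f (γ • v) = f ((pickIso (supp v) (u.image (fun m : ℕ => (m : ℚ)))) • v)
          rw [huU]
          exact phi_eq v γ
      have hsub1 : (supp v).image γ₀ ⊆ T := by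
        rw [← hγ₀]
        apply Finset.image_subset_image
        intro q hq
        exact Finset.mem_biUnion.mpr ⟨(g, v), hp, Finset.mem_union_left _ hq⟩
      have hsub2 : (supp v).image (γ₀ * g) ⊆ T := by
        have himim : (supp v).image (γ₀ * g) = ((supp v).image g).image γ₀ := by
          rw [Finset.image_image]
          rfl
        rw [himim, ← hγ₀]
        apply Finset.image_subset_image
        intro q hq
        exact Finset.mem_biUnion.mpr ⟨(g, v), hp, Finset.mem_union_right _ hq⟩
      obtain ⟨u1, hu1B, hu1c, he1⟩ := claim γ₀ hsub1
      obtain ⟨u2, hu2B, hu2c, he2⟩ := claim (γ₀ * g) hsub2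
      have hcc : c (g, v) u2 = c (g, v) u1 := hB (g, v) hp u2 hu2B hu2c u1 hu1B hu1c
      calc f (γ₀ • (g • v)) = f ((γ₀ * g) • v) := by rw [mul_smul]
        _ = c (g, v) u2 := he2
        _ = c (g, v) u1 := hcc
        _ = f (γ₀ • v) := he1.symm
  -- compactness via ultrafilter
  choose H hH1 hH2 using finite_step
  haveI : Nonempty (Finset ((ℚ ≃o ℚ) × V)) := ⟨∅⟩
  let U : Ultrafilter (Finset ((ℚ ≃o ℚ) × V)) := Ultrafilter.of Filter.atTop
  have hUatTop : ∀ s₀ : Finset ((ℚ ≃o ℚ) × V), {s | s₀ ≤ s} ∈ U :=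
    fun s₀ => Ultrafilter.of_le _ (Filter.mem_atTop s₀)
  have hlim : ∀ v : V, ∃ d : D, {s | H s v = d} ∈ U := by
    intro v
    by_contra hcon
    push_neg at hcon
    have hcompl : ∀ d : D, {s | H s v = d}ᶜ ∈ U :=
      fun d => (Ultrafilter.compl_mem_iff_notMem).mpr (hcon d)
    have hint : ⋂ d : D, {s | H s v = d}ᶜ ∈ U := Filter.iInter_mem.mpr hcompl
    obtain ⟨s, hs⟩ := Filter.nonempty_of_mem (Ultrafilter.mem_coe.mpr hint)
    exact (Set.mem_iInter.mp hs (H s v)) rfl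
  choose h hh using hlim
  refine ⟨h, ?_, ?_⟩
  · intro i x hx
    have hW : ⋂ j : Fin (n i), {s | H s (x j) = h (x j)} ∈ U :=
      Filter.iInter_mem.mpr (fun j => hh (x j))
    obtain ⟨s, hs⟩ := Filter.nonempty_of_mem (Ultrafilter.mem_coe.mpr hW)
    have hcomp : h ∘ x = H s ∘ x := by
      funext j
      exact (Set.mem_iInter.mp hs j).symm
    rw [hcomp]
    exact hH1 s i x hx
  · intro g v
    have hW : {s | H s v = h v} ∩ ({s | H s (g • v) = h (g • v)} ∩
        {s | ({(g, v)} : Finset ((ℚ ≃o ℚ) × V)) ≤ s}) ∈ U :=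
      Filter.inter_mem (hh v) (Filter.inter_mem (hh (g • v)) (hUatTop {(g, v)}))
    obtain ⟨s, hs1, hs2, hs3⟩ := Filter.nonempty_of_mem (Ultrafilter.mem_coe.mpr hW)
    rw [← hs2, ← hs1]
    exact hH2 s (g, v) (hs3 (Finset.mem_singleton_self _))
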